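/- Let X be a real Hilbert space, F : X → X monotone and hemicontinuous, y ∈ X, and assume the solution set L = {x ∈ X : F(x) = y} is nonempty. Let (δ_n) be a sequence of positive numbers with δ_n → 0, let (α_n) be positive numbers with δ_n/α_n → 0, let y_n ∈ X with ‖y − y_n‖ ≤ δ_n, and let x_n ∈ X satisfy F(x_n) + α_n(x_n − x̄) = y_n for a fixed x̄ ∈ X. If in addition ‖F(x_n) − y‖ → 0 as n → ∞, then there is a unique x̄-minimum-norm solution x†_min ∈ L, and x_n converges strongly (in norm) to x†_min as n → ∞. -/

import Mathlib

open RealInnerProductSpace Filter Topology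

lemma minty_lemma {X : Type*} [NormedAddCommGroup X] [InnerProductSpace ℝ X]
    (F : X → X)
    (hhemi : ∀ x v w : X, ContinuousOn (fun t : ℝ => ⟪F (x + t • v), w⟫) (Set.Icc 0 1))
    (y z : X) (h : ∀ v : X, 0 ≤ ⟪F v - y, v - z⟫) : F z = y := by
  have key : ∀ w : X, ⟪y, w⟫ ≤ ⟪F z, w⟫ := by
    intro w
    have hc : ContinuousWithinAt (fun t : ℝ => ⟪F (z + t • w), w⟫) (Set.Ioc 0 1) 0 :=
      ((hhemi z w w) 0 ⟨le_refl 0, zero_le_one⟩).mono Set.Ioc_subset_Icc_self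
    haveI : (𝓝[Set.Ioc (0:ℝ) 1] 0).NeBot := by
      apply mem_closure_iff_nhdsWithin_neBot.mp
      rw [closure_Ioc (one_ne_zero : (1:ℝ) ≠ 0).symm]
      exact ⟨le_refl 0, zero_le_one⟩
    have hev : ∀ᶠ t in 𝓝[Set.Ioc (0:ℝ) 1] 0, ⟪y, w⟫ ≤ ⟪F (z + t • w), w⟫ := by
      filter_upwards [self_mem_nhdsWithin] with t ht
      have h0 := h (z + t • w)
      have hsub : z + t • w - z = t • w := by abel
      rw [hsub, real_inner_smul_right] at h0
      have : 0 ≤ ⟪F (z + t • w) - y, w⟫ := nonneg_of_mul_nonneg_right h0 ht.1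
      rw [inner_sub_left] at this; linarith
    have hlim : Tendsto (fun t : ℝ => ⟪F (z + t • w), w⟫) (𝓝[Set.Ioc (0:ℝ) 1] 0)
        (𝓝 ⟪F (z + (0:ℝ) • w), w⟫) := hc
    have h5 := ge_of_tendsto hlim hev
    simpa using h5
  have h2 : ∀ w : X, 0 ≤ ⟪F z - y, w⟫ := by
    intro w; rw [inner_sub_left]; linarith [key w]
  have h3 := h2 (y - F z)
  rw [show y - F z = -(F z - y) by abel, inner_neg_right] at h3
  have h4 : ⟪F z - y, F z - y⟫ = 0 :=
    le_antisymm (by linarith) real_inner_self_nonneg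
  have := inner_self_eq_zero.mp h4
  rwa [sub_eq_zero] at this

theorem stmt_5 {X : Type*} [NormedAddCommGroup X] [InnerProductSpace ℝ X] [CompleteSpace X]
    (F : X → X) (hmono : ∀ x x' : X, 0 ≤ ⟪F x - F x', x - x'⟫)
    (hhemi : ∀ x v w : X, ContinuousOn (fun t : ℝ => ⟪F (x + t • v), w⟫) (Set.Icc 0 1))
    (y xbar : X) (L : Set X) (hLdef : L = {x : X | F x = y}) (hLne : L.Nonempty)
    (δ α : ℕ → ℝ) (hδpos : ∀ n, 0 < δ n) (hαpos : ∀ n, 0 < α n)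
    (hδ0 : Tendsto δ atTop (nhds 0))
    (hratio : Tendsto (fun n => δ n / α n) atTop (nhds 0))
    (yn xn : ℕ → X) (hnoise : ∀ n, ‖y - yn n‖ ≤ δ n)
    (hlav : ∀ n, F (xn n) + α n • (xn n - xbar) = yn n)
    (hres : Tendsto (fun n => ‖F (xn n) - y‖) atTop (nhds 0)) :
    ∃ xmin ∈ L, (∀ x ∈ L, ‖xmin - xbar‖ ≤ ‖x - xbar‖) ∧
      (∀ x' ∈ L, (∀ x ∈ L, ‖x' - xbar‖ ≤ ‖x - xbar‖) → x' = xmin) ∧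
      Tendsto xn atTop (nhds xmin) := by
  set ε : ℕ → ℝ := fun n => δ n / α n with hεdef
  have hεpos : ∀ n, 0 < ε n := fun n => div_pos (hδpos n) (hαpos n)
  -- the key variational inequality
  have key : ∀ n, ∀ x ∈ L, ⟪xn n - xbar, xn n - x⟫ ≤ ε n * ‖xn n - x‖ := by
    intro n x hx
    have hFx : F x = y := by rw [hLdef] at hx; exact hx
    have hFxn : F (xn n) = yn n - α n • (xn n - xbar) := by
      have := hlav n; linear_combination (norm := module) this
    have h0 := hmono (xn n) x
    rw [hFxn, hFx] at h0
    have hre : yn n - α n • (xn n - xbar) - y = (yn n - y) - α n • (xn n - xbar) := by abel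
    rw [hre, inner_sub_left, real_inner_smul_left] at h0
    have hcs : ⟪yn n - y, xn n - x⟫ ≤ δ n * ‖xn n - x‖ := by
      calc ⟪yn n - y, xn n - x⟫ ≤ ‖yn n - y‖ * ‖xn n - x‖ := real_inner_le_norm _ _
        _ ≤ δ n * ‖xn n - x‖ := by
            apply mul_le_mul_of_nonneg_right _ (norm_nonneg _)
            rw [norm_sub_rev]; exact hnoise n
    rw [hεdef]
    rw [div_mul_eq_mul_div, le_div_iff₀ (hαpos n)]
    nlinarith [h0, hcs]
  -- Minty characterization of L
  have hLM : L = {x : X | ∀ v : X, 0 ≤ ⟪F v - y, v - x⟫} := by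
    ext x; constructor
    · intro hx v
      have hFx : F x = y := by rw [hLdef] at hx; exact hx
      have := hmono v x; rwa [hFx] at this
    · intro hx
      rw [hLdef]
      exact minty_lemma F hhemi y x hx
  have hLM' : L = ⋂ v : X, {x : X | ⟪F v - y, x⟫ ≤ ⟪F v - y, v⟫} := by
    rw [hLM]; ext x
    simp only [Set.mem_setOf_eq, Set.mem_iInter, inner_sub_right]
    constructor <;> intro h v <;> have := h v <;> linarith
  have hLclosed : IsClosed L := by
    rw [hLM']
    exact isClosed_iInter fun v =>
      isClosed_le (Continuous.inner continuous_const continuous_id) continuous_const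
  have hLconvex : Convex ℝ L := by
    rw [hLM']
    exact convex_iInter fun v => convex_halfSpace_le
      ⟨fun a b => inner_add_right _ _ _, fun c a => real_inner_smul_right _ _ c⟩ _
  -- the minimum norm solution
  obtain ⟨xmin, hxminL, hxmineq⟩ :=
    exists_norm_eq_iInf_of_complete_convex hLne hLclosed.isComplete hLconvex xbar
  haveI : Nonempty L := hLne.to_subtype
  have hmin : ∀ x ∈ L, ‖xmin - xbar‖ ≤ ‖x - xbar‖ := by
    intro x hx
    have h1 : ‖xbar - xmin‖ ≤ ‖xbar - x‖ := by
      rw [hxmineq]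
      exact ciInf_le ⟨0, Set.forall_mem_range.2 fun _ => norm_nonneg _⟩ (⟨x, hx⟩ : L)
    rw [norm_sub_rev xbar xmin, norm_sub_rev xbar x] at h1
    exact h1
  have hVI : ∀ w ∈ L, ⟪xbar - xmin, w - xmin⟫ ≤ 0 :=
    (norm_eq_iInf_iff_real_inner_le_zero hLconvex hxminL).mp hxmineq
  have huniq : ∀ x' ∈ L, (∀ x ∈ L, ‖x' - xbar‖ ≤ ‖x - xbar‖) → x' = xmin := by
    intro x' hx'L hx'min
    have h1 : ‖x' - xbar‖ = ‖xmin - xbar‖ :=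
      le_antisymm (hx'min xmin hxminL) (hmin x' hx'L)
    have hv := hVI x' hx'L
    have e2 : ⟪xbar - xmin, x' - xmin⟫ =
        -⟪xmin - xbar, x' - xbar⟫ + ⟪xmin - xbar, xmin - xbar⟫ := by
      rw [show xbar - xmin = -(xmin - xbar) by abel,
        show x' - xmin = (x' - xbar) - (xmin - xbar) by abel]
      rw [inner_neg_left, inner_sub_right]; ring
    have e1 : ⟪x' - xmin, x' - xmin⟫ = ⟪x' - xbar, x' - xbar⟫
        - 2 * ⟪xmin - xbar, x' - xbar⟫ + ⟪xmin - xbar, xmin - xbar⟫ := by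
      rw [show x' - xmin = (x' - xbar) - (xmin - xbar) by abel]
      simp only [inner_sub_left, inner_sub_right, real_inner_comm x' xbar,
        real_inner_comm x' xmin, real_inner_comm xbar xmin]
      ring
    have hn1 : ⟪x' - xbar, x' - xbar⟫ = ⟪xmin - xbar, xmin - xbar⟫ := by
      rw [real_inner_self_eq_norm_mul_norm, real_inner_self_eq_norm_mul_norm, h1]
    have h2 : ⟪x' - xmin, x' - xmin⟫ ≤ 0 := by
      rw [e1, hn1]; rw [e2] at hv; linarith
    have h3 : x' - xmin = 0 := real_inner_self_nonpos.mp h2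
    rwa [sub_eq_zero] at h3
  refine ⟨xmin, hxminL, hmin, huniq, ?_⟩
  -- a priori bound on ‖xn n - xmin‖
  have hbnd2 : ∀ n, ‖xn n - xmin‖ ≤ ‖xmin - xbar‖ + ε n := by
    intro n
    have hk := key n xmin hxminL
    have hsplit : ⟪xn n - xbar, xn n - xmin⟫
        = ⟪xn n - xmin, xn n - xmin⟫ + ⟪xmin - xbar, xn n - xmin⟫ := by
      rw [show xn n - xbar = (xn n - xmin) + (xmin - xbar) by abel, inner_add_left]
    have hlow : -(‖xmin - xbar‖ * ‖xn n - xmin‖) ≤ ⟪xmin - xbar, xn n - xmin⟫ := by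
      have h3 := abs_real_inner_le_norm (xmin - xbar) (xn n - xmin)
      linarith [neg_abs_le ⟪xmin - xbar, xn n - xmin⟫]
    have hsq : ⟪xn n - xmin, xn n - xmin⟫ = ‖xn n - xmin‖ * ‖xn n - xmin‖ :=
      real_inner_self_eq_norm_mul_norm _
    have hmul : ‖xn n - xmin‖ * ‖xn n - xmin‖ ≤ (‖xmin - xbar‖ + ε n) * ‖xn n - xmin‖ := by
      nlinarith
    rcases eq_or_lt_of_le (norm_nonneg (xn n - xmin)) with h0 | h0
    · rw [← h0]; linarith [norm_nonneg (xmin - xbar), (hεpos n).le]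
    · exact le_of_mul_le_mul_right hmul h0
  set C : ℝ := ‖xmin‖ + ‖xmin - xbar‖ + 1 with hCdef
  have hCev : ∀ᶠ n in atTop, ‖xn n‖ ≤ C := by
    have h1 : ∀ᶠ n in atTop, ε n < 1 := hratio.eventually (gt_mem_nhds one_pos)
    filter_upwards [h1] with n hn
    have h2 := hbnd2 n
    calc ‖xn n‖ = ‖(xn n - xmin) + xmin‖ := by rw [sub_add_cancel]
      _ ≤ ‖xn n - xmin‖ + ‖xmin‖ := norm_add_le _ _
      _ ≤ C := by rw [hCdef]; linarith
  set D := InnerProductSpace.toDual ℝ X with hDdef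
  set Φ : ℕ → WeakDual ℝ X := fun n => StrongDual.toWeakDual (D (xn n)) with hΦdef
  have hΦapp : ∀ n (w : X), Φ n w = ⟪xn n, w⟫ := by
    intro n w
    rw [hΦdef]
    exact InnerProductSpace.toDual_apply_apply
  -- the main claim
  have claim : ∀ η : ℝ, 0 < η → ∀ᶠ n in atTop, ⟪xmin - xbar, xmin - xn n⟫ ≤ η := by
    intro η hη
    by_contra hcon
    rw [not_eventually] at hcon
    have hfreq : ∃ᶠ n in atTop, η < ⟪xmin - xbar, xmin - xn n⟫ := by
      apply hcon.mono; intro n hn; push_neg at hn; exact hn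
    set f : Filter ℕ := atTop ⊓ 𝓟 {n | η < ⟪xmin - xbar, xmin - xn n⟫} with hfdef
    haveI hfne : f.NeBot := frequently_iff_neBot.mp hfreq
    have hKcpt : IsCompact
        (WeakDual.toStrongDual ⁻¹' Metric.closedBall (0 : StrongDual ℝ X) C) :=
      WeakDual.isCompact_closedBall 0 C
    have hfK : map Φ f ≤ 𝓟 (WeakDual.toStrongDual ⁻¹' Metric.closedBall 0 C) := by
      rw [le_principal_iff, mem_map]
      apply mem_inf_of_left (s := Φ ⁻¹' _)
      apply Eventually.mono hCev
      intro n hn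
      simp only [Set.mem_preimage, Metric.mem_closedBall, dist_zero_right]
      have : ‖WeakDual.toStrongDual (Φ n)‖ = ‖D (xn n)‖ := rfl
      rw [this, (D : X ≃ₗᵢ⋆[ℝ] StrongDual ℝ X).norm_map]
      exact hn
    obtain ⟨ψ, hψK, hψcl⟩ := hKcpt hfK
    have hmemS : ∀ S : Set (WeakDual ℝ X), IsClosed S → (∀ᶠ n in f, Φ n ∈ S) → ψ ∈ S := by
      intro S hS hmem
      have h1 : ClusterPt ψ (𝓟 S) := hψcl.mono (le_principal_iff.mpr (mem_map.mpr hmem))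
      rw [← hS.closure_eq]
      exact mem_closure_iff_clusterPt.mpr h1
    set z : X := D.symm (WeakDual.toStrongDual ψ) with hzdef
    have hzw : ∀ w : X, ψ w = ⟪z, w⟫ := by
      intro w
      have h1 : D z = WeakDual.toStrongDual ψ := D.apply_symm_apply _
      have h2 : ⟪z, w⟫ = D z w := (InnerProductSpace.toDual_apply_apply).symm
      rw [h2, h1]; rfl
    -- z is a solution
    have hzL : z ∈ L := by
      rw [hLM]
      intro v
      have hmain : ∀ e : ℝ, 0 < e → ⟪F v - y, z⟫ ≤ ⟪F v - y, v⟫ + e := by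
        intro e he
        have hSclosed : IsClosed {ψ' : WeakDual ℝ X | ψ' (F v - y) ≤ ⟪F v - y, v⟫ + e} :=
          isClosed_le (WeakDual.eval_continuous (F v - y)) continuous_const
        have hevS : ∀ᶠ n in atTop, ⟪F v - y, xn n⟫ ≤ ⟪F v - y, v⟫ + e := by
          have htend : Tendsto (fun n => ‖F (xn n) - y‖ * (‖v‖ + C)) atTop (𝓝 0) := by
            have := hres.mul_const (‖v‖ + C); simpa using this
          have h2 : ∀ᶠ n in atTop, ‖F (xn n) - y‖ * (‖v‖ + C) < e :=
            htend.eventually (gt_mem_nhds he)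
          filter_upwards [h2, hCev] with n hn hCn
          have hm := hmono v (xn n)
          have hsplit : ⟪F v - F (xn n), v - xn n⟫
              = ⟪F v - y, v - xn n⟫ - ⟪F (xn n) - y, v - xn n⟫ := by
            rw [show F v - F (xn n) = (F v - y) - (F (xn n) - y) by abel, inner_sub_left]
          have hlow : -(‖F (xn n) - y‖ * ‖v - xn n‖) ≤ ⟪F (xn n) - y, v - xn n⟫ := by
            have h3 := abs_real_inner_le_norm (F (xn n) - y) (v - xn n)
            linarith [neg_abs_le ⟪F (xn n) - y, v - xn n⟫]
          have hnm : ‖v - xn n‖ ≤ ‖v‖ + C := le_trans (norm_sub_le _ _) (by linarith)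
          have h4 : ‖F (xn n) - y‖ * ‖v - xn n‖ ≤ ‖F (xn n) - y‖ * (‖v‖ + C) :=
            mul_le_mul_of_nonneg_left hnm (norm_nonneg _)
          have h5 : -e ≤ ⟪F v - y, v - xn n⟫ := by linarith
          rw [inner_sub_right] at h5
          linarith
        have hψS : ψ ∈ {ψ' : WeakDual ℝ X | ψ' (F v - y) ≤ ⟪F v - y, v⟫ + e} := by
          apply hmemS _ hSclosed
          apply Eventually.filter_mono (inf_le_left : f ≤ atTop)
          apply Eventually.mono hevS
          intro n hn
          show Φ n (F v - y) ≤ _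
          rw [hΦapp n (F v - y), real_inner_comm]
          exact hn
        have h6 : ψ (F v - y) ≤ ⟪F v - y, v⟫ + e := hψS
        rw [hzw (F v - y), real_inner_comm] at h6
        exact h6
      have h7 : ⟪F v - y, z⟫ ≤ ⟪F v - y, v⟫ := by
        by_contra h8
        push_neg at h8
        have := hmain ((⟪F v - y, z⟫ - ⟪F v - y, v⟫) / 2) (by linarith)
        linarith
      rw [inner_sub_right]
      linarith
    -- z violates the variational inequality
    have hSb : IsClosed {ψ' : WeakDual ℝ X | ψ' (xmin - xbar) ≤ ⟪xmin - xbar, xmin⟫ - η} :=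
      isClosed_le (WeakDual.eval_continuous _) continuous_const
    have hTmem : ∀ᶠ n in f,
        Φ n ∈ {ψ' : WeakDual ℝ X | ψ' (xmin - xbar) ≤ ⟪xmin - xbar, xmin⟫ - η} := by
      have hT' : {n | η < ⟪xmin - xbar, xmin - xn n⟫} ∈ f :=
        mem_inf_of_right (mem_principal_self _)
      apply eventually_of_mem hT'
      intro n hn
      have hn' : η < ⟪xmin - xbar, xmin - xn n⟫ := hn
      rw [inner_sub_right] at hn'
      show Φ n (xmin - xbar) ≤ _
      rw [hΦapp n (xmin - xbar), real_inner_comm]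
      linarith
    have hψb : ψ (xmin - xbar) ≤ ⟪xmin - xbar, xmin⟫ - η := hmemS _ hSb hTmem
    rw [hzw (xmin - xbar), real_inner_comm] at hψb
    have hvz := hVI z hzL
    have hrw : ⟪xbar - xmin, z - xmin⟫ = ⟪xmin - xbar, xmin⟫ - ⟪xmin - xbar, z⟫ := by
      rw [show xbar - xmin = -(xmin - xbar) by abel, inner_neg_left, inner_sub_right]
      ring
    rw [hrw] at hvz
    linarith
  -- conclude strong convergence
  rw [tendsto_iff_norm_sub_tendsto_zero]
  rw [NormedAddCommGroup.tendsto_nhds_zero]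
  intro e he
  have hE1 := claim (e * e / 4) (by positivity)
  have hE2 : ∀ᶠ n in atTop, ε n * (‖xmin - xbar‖ + ε n) < e * e / 4 := by
    have ht : Tendsto (fun n => ε n * (‖xmin - xbar‖ + ε n)) atTop (𝓝 0) := by
      have ht0 : Tendsto (fun _ : ℕ => ‖xmin - xbar‖) atTop (𝓝 ‖xmin - xbar‖) :=
        tendsto_const_nhds
      have := hratio.mul (ht0.add hratio)
      simpa using this
    exact ht.eventually (gt_mem_nhds (by positivity))
  filter_upwards [hE1, hE2] with n h1 h2
  have hk := key n xmin hxminL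
  have hsplit : ⟪xn n - xbar, xn n - xmin⟫
      = ⟪xn n - xmin, xn n - xmin⟫ - ⟪xmin - xbar, xmin - xn n⟫ := by
    rw [show xn n - xbar = (xn n - xmin) + (xmin - xbar) by abel, inner_add_left]
    simp only [inner_sub_right]
    ring
  have hb := hbnd2 n
  have hεn := hεpos n
  have heb : ε n * ‖xn n - xmin‖ ≤ ε n * (‖xmin - xbar‖ + ε n) :=
    mul_le_mul_of_nonneg_left hb hεn.le
  have hsq : ⟪xn n - xmin, xn n - xmin⟫ = ‖xn n - xmin‖ * ‖xn n - xmin‖ :=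
    real_inner_self_eq_norm_mul_norm _
  have hfin : ‖xn n - xmin‖ * ‖xn n - xmin‖ ≤ e * e / 2 := by
    linarith [hk, hsplit, hsq, heb, h1, h2]
  rw [Real.norm_eq_abs, abs_of_nonneg (norm_nonneg _)]
  by_contra hge
  push_neg at hge
  have hee : e * e ≤ ‖xn n - xmin‖ * ‖xn n - xmin‖ :=
    mul_le_mul hge hge he.le (norm_nonneg _)
  linarith [mul_pos he he]
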